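/- arXiv:2112.05359 — 3 statements merged into one kernel-verified Lean document; each statement's English description precedes it below -/
import Mathlib

section
/- Let B ∈ ℝ^{m×n}, V ∈ ℝ^{n×p}, and let S be a sub-sampling matrix with d i.i.d. columns and probabilities p_i > 0 summing to 1. Then E[‖BV − B S Sᵀ V‖_F²] = (1/d) (Σ_{i=1}^n ‖B^{(i)}‖₂² ‖V_{(i)}‖₂² / p_i − ‖BV‖_F²), where B^{(i)} is the i-th column of B and V_{(i)} the i-th row of V. -/
open Matrix BigOperators

/-- Sub-sampling sketching matrix determined by a choice of column indices
`c : Fin d → Fin n`: the `k`-th column is `(1/√(d p (c k))) e_{c k}`. -/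
noncomputable def subSampleMatrix (n d : ℕ) (p : Fin n → ℝ) (c : Fin d → Fin n) :
    Matrix (Fin n) (Fin d) ℝ :=
  fun i k => if c k = i then 1 / Real.sqrt (d * p i) else 0

/-- Squared Frobenius norm of a matrix. -/
def frobSq {m q : ℕ} (M : Matrix (Fin m) (Fin q) ℝ) : ℝ :=
  ∑ a, ∑ b, (M a b) ^ 2


lemma sum_prod_pi {n d : ℕ} (g : Fin d → Fin n → ℝ) :
    ∑ c : Fin d → Fin n, ∏ k, g k (c k) = ∏ k, ∑ i, g k i := by
  rw [Finset.prod_univ_sum, Fintype.piFinset_univ]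

variable {n d : ℕ} {p f : Fin n → ℝ}

lemma exp_pair (hsum : ∑ i, p i = 1) (f : Fin n → ℝ) (k1 k2 : Fin d) :
    ∑ c : Fin d → Fin n, (∏ k, p (c k)) * (f (c k1) * f (c k2))
      = if k1 = k2 then ∑ i, p i * (f i * f i)
        else (∑ i, p i * f i) * (∑ i, p i * f i) := by
  have key : ∀ c : Fin d → Fin n, (∏ k, p (c k)) * (f (c k1) * f (c k2))
      = ∏ k, (p (c k) * (if k = k1 then f (c k) else 1) * (if k = k2 then f (c k) else 1)) := by
    intro c
    rw [Finset.prod_mul_distrib, Finset.prod_mul_distrib]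
    simp [Finset.prod_ite_eq', mul_assoc]
  rw [Finset.sum_congr rfl fun c _ => key c,
    sum_prod_pi (fun k i => (p i * if k = k1 then f i else 1) * if k = k2 then f i else 1)]
  by_cases h : k1 = k2
  · subst h
    simp only [if_pos]
    have : ∀ k : Fin d, (∑ i, p i * (if k = k1 then f i else 1) * (if k = k1 then f i else 1))
        = if k = k1 then ∑ i, p i * (f i * f i) else 1 := by
      intro k
      by_cases hk : k = k1 <;> simp [hk, hsum, mul_assoc]
    rw [Finset.prod_congr rfl fun k _ => this k]
    simp [Finset.prod_ite_eq']
  · rw [if_neg h]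
    have : ∀ k : Fin d, (∑ i, p i * (if k = k1 then f i else 1) * (if k = k2 then f i else 1))
        = (if k = k1 then ∑ i, p i * f i else 1) * (if k = k2 then ∑ i, p i * f i else 1) := by
      intro k
      by_cases hk : k = k1
      · subst hk
        simp [if_neg h, Finset.sum_mul]
      · by_cases hk2 : k = k2 <;> simp [hk, hk2, hsum, Finset.sum_mul, Ne.symm h]
    rw [Finset.prod_congr rfl fun k _ => this k, Finset.prod_mul_distrib]
    simp [Finset.prod_ite_eq']

lemma exp_one (hsum : ∑ i, p i = 1) :
    ∑ c : Fin d → Fin n, (∏ k, p (c k)) = 1 := by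
  rw [sum_prod_pi (fun _ i => p i)]
  simp [hsum]

lemma exp_lin (hsum : ∑ i, p i = 1) (f : Fin n → ℝ) :
    ∑ c : Fin d → Fin n, (∏ k, p (c k)) * (∑ k, f (c k))
      = d * ∑ i, p i * f i := by
  have key : ∀ (c : Fin d → Fin n) (k0 : Fin d), (∏ k, p (c k)) * f (c k0)
      = ∏ k, (p (c k) * (if k = k0 then f (c k) else 1)) := by
    intro c k0
    rw [Finset.prod_mul_distrib]
    simp [Finset.prod_ite_eq']
  calc ∑ c : Fin d → Fin n, (∏ k, p (c k)) * (∑ k, f (c k))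
      = ∑ k0 : Fin d, ∑ c : Fin d → Fin n, (∏ k, p (c k)) * f (c k0) := by
        rw [Finset.sum_comm]
        exact Finset.sum_congr rfl fun c _ => Finset.mul_sum _ _ _
    _ = ∑ k0 : Fin d, (∑ i, p i * f i) := by
        refine Finset.sum_congr rfl fun k0 _ => ?_
        rw [Finset.sum_congr rfl fun c _ => key c k0,
          sum_prod_pi (fun k i => p i * if k = k0 then f i else 1)]
        have : ∀ k : Fin d, (∑ i, p i * (if k = k0 then f i else 1))
            = if k = k0 then ∑ i, p i * f i else 1 := by
          intro k; by_cases hk : k = k0 <;> simp [hk, hsum]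
        rw [Finset.prod_congr rfl fun k _ => this k]
        simp [Finset.prod_ite_eq']
    _ = d * ∑ i, p i * f i := by simp [mul_comm]

lemma exp_quad (hsum : ∑ i, p i = 1) (f : Fin n → ℝ) :
    ∑ c : Fin d → Fin n, (∏ k, p (c k)) * (∑ k, f (c k))^2
      = d * ∑ i, p i * (f i * f i)
        + ((d : ℝ)^2 - d) * ((∑ i, p i * f i) * (∑ i, p i * f i)) := by
  have expand : ∀ c : Fin d → Fin n, (∏ k, p (c k)) * (∑ k, f (c k))^2
      = ∑ k1 : Fin d, ∑ k2 : Fin d, (∏ k, p (c k)) * (f (c k1) * f (c k2)) := by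
    intro c
    rw [sq, Finset.sum_mul_sum, Finset.mul_sum]
    exact Finset.sum_congr rfl fun k1 _ => Finset.mul_sum _ _ _
  rw [Finset.sum_congr rfl fun c _ => expand c, Finset.sum_comm]
  rw [Finset.sum_congr rfl (fun (k1 : Fin d) _ => Finset.sum_comm)]
  rw [Finset.sum_congr rfl (fun k1 _ => Finset.sum_congr rfl fun k2 _ => exp_pair hsum f k1 k2)]
  set A := ∑ i, p i * (f i * f i) with hA
  set M := (∑ i, p i * f i) * (∑ i, p i * f i) with hM
  have step : ∀ k1 k2 : Fin d, (if k1 = k2 then A else M) = M + (if k1 = k2 then A - M else 0) := by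
    intro k1 k2; split_ifs <;> ring
  rw [Finset.sum_congr rfl (fun k1 _ => Finset.sum_congr rfl fun k2 _ => step k1 k2)]
  have inner : ∀ k1 : Fin d, (∑ k2 : Fin d, (M + if k1 = k2 then A - M else 0))
      = d * M + (A - M) := by
    intro k1
    rw [Finset.sum_add_distrib, Finset.sum_const, Finset.sum_ite_eq]
    simp [Finset.card_univ, nsmul_eq_mul]
  rw [Finset.sum_congr rfl (fun k1 _ => inner k1), Finset.sum_const, Finset.card_univ]
  simp [nsmul_eq_mul]
  ring

lemma sketch_entry {m q : ℕ} (hd : 0 < d) (hp : ∀ i, 0 < p i)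
    (B : Matrix (Fin m) (Fin n) ℝ) (V : Matrix (Fin n) (Fin q) ℝ)
    (c : Fin d → Fin n) (a : Fin m) (b : Fin q) :
    (B * subSampleMatrix n d p c * (subSampleMatrix n d p c)ᵀ * V) a b
      = (1 / d) * ∑ k, B a (c k) * V (c k) b / p (c k) := by
  have hdp : ∀ i, (0:ℝ) < d * p i := fun i =>
    mul_pos (by exact_mod_cast hd) (hp i)
  simp only [Matrix.mul_apply, Matrix.transpose_apply, subSampleMatrix]
  simp only [mul_ite, mul_zero, ite_mul, zero_mul, Finset.sum_ite_eq, Finset.mem_univ, if_true]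
  simp only [Finset.sum_mul, ite_mul, zero_mul]
  rw [Finset.sum_comm]
  simp only [Finset.sum_ite_eq, Finset.mem_univ, if_true]
  rw [Finset.mul_sum]
  refine Finset.sum_congr rfl fun k _ => ?_
  have h1 : Real.sqrt (d * p (c k)) * Real.sqrt (d * p (c k)) = d * p (c k) :=
    Real.mul_self_sqrt (hdp _).le
  have h2 : Real.sqrt (d * p (c k)) ≠ 0 := (Real.sqrt_pos.mpr (hdp _)).ne'
  have h3 : p (c k) ≠ 0 := (hp _).ne'
  have h4 : (d:ℝ) ≠ 0 := by exact_mod_cast hd.ne'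
  have key : (1 / Real.sqrt (d * p (c k))) * (1 / Real.sqrt (d * p (c k)))
      = 1 / (d * p (c k)) := by
    rw [div_mul_div_comm, one_mul, h1]
  rw [mul_assoc (B a (c k)), key]
  field_simp



lemma exp_sq_dev (hd : 0 < d) (hsum : ∑ i, p i = 1) (f : Fin n → ℝ) (μ : ℝ)
    (hμ : ∑ i, p i * f i = μ) :
    ∑ c : Fin d → Fin n, (∏ k, p (c k)) * (μ - (1 / d) * ∑ k, f (c k)) ^ 2
      = (1 / d) * ((∑ i, p i * (f i * f i)) - μ ^ 2) := by
  have hd' : (d : ℝ) ≠ 0 := by exact_mod_cast hd.ne'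
  have expand : ∀ c : Fin d → Fin n,
      (∏ k, p (c k)) * (μ - (1 / d) * ∑ k, f (c k)) ^ 2
      = μ ^ 2 * (∏ k, p (c k))
        - (2 * μ / d) * ((∏ k, p (c k)) * (∑ k, f (c k)))
        + (1 / d) ^ 2 * ((∏ k, p (c k)) * (∑ k, f (c k)) ^ 2) := by
    intro c; field_simp; ring
  rw [Finset.sum_congr rfl fun c _ => expand c, Finset.sum_add_distrib,
    Finset.sum_sub_distrib, ← Finset.mul_sum, ← Finset.mul_sum, ← Finset.mul_sum,
    exp_one hsum, exp_lin hsum, exp_quad hsum, hμ]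
  field_simp
  ring


/-- Exact expected squared Frobenius error of the sub-sampling sketch:
`E[‖BV − B S Sᵀ V‖_F²] = (1/d) (∑ᵢ ‖B^{(i)}‖₂² ‖V_{(i)}‖₂² / pᵢ − ‖BV‖_F²)`. -/
theorem expected_frobenius_error_subSample (m n q d : ℕ) (hd : 0 < d)
    (B : Matrix (Fin m) (Fin n) ℝ) (V : Matrix (Fin n) (Fin q) ℝ)
    (p : Fin n → ℝ) (hp : ∀ i, 0 < p i) (hsum : ∑ i, p i = 1) :
    (∑ c : Fin d → Fin n, (∏ k, p (c k)) *
        frobSq (B * V - B * subSampleMatrix n d p c * (subSampleMatrix n d p c)ᵀ * V))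
      = (1 / d) *
        ((∑ i, (∑ a, (B a i) ^ 2) * (∑ b, (V i b) ^ 2) / p i) - frobSq (B * V)) := by
  have hd' : (d : ℝ) ≠ 0 := by exact_mod_cast hd.ne'
  have hfro : ∀ c : Fin d → Fin n,
      frobSq (B * V - B * subSampleMatrix n d p c * (subSampleMatrix n d p c)ᵀ * V)
      = ∑ a, ∑ b, ((B * V) a b - (1 / d) * ∑ k, B a (c k) * V (c k) b / p (c k)) ^ 2 := by
    intro c
    unfold frobSq
    refine Finset.sum_congr rfl fun a _ => Finset.sum_congr rfl fun b _ => ?_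
    rw [Matrix.sub_apply, sketch_entry hd hp]
  have swap : (∑ c : Fin d → Fin n, (∏ k, p (c k)) *
        frobSq (B * V - B * subSampleMatrix n d p c * (subSampleMatrix n d p c)ᵀ * V))
      = ∑ a, ∑ b, ∑ c : Fin d → Fin n, (∏ k, p (c k)) *
          ((B * V) a b - (1 / d) * ∑ k, B a (c k) * V (c k) b / p (c k)) ^ 2 := by
    calc (∑ c : Fin d → Fin n, (∏ k, p (c k)) *
        frobSq (B * V - B * subSampleMatrix n d p c * (subSampleMatrix n d p c)ᵀ * V))
        = ∑ c : Fin d → Fin n, ∑ a, ∑ b, (∏ k, p (c k)) *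
            ((B * V) a b - (1 / d) * ∑ k, B a (c k) * V (c k) b / p (c k)) ^ 2 :=
          Finset.sum_congr rfl fun c _ => by
            rw [hfro c, Finset.mul_sum]
            exact Finset.sum_congr rfl fun a _ => Finset.mul_sum _ _ _
      _ = ∑ a, ∑ c : Fin d → Fin n, ∑ b, (∏ k, p (c k)) *
            ((B * V) a b - (1 / d) * ∑ k, B a (c k) * V (c k) b / p (c k)) ^ 2 :=
          Finset.sum_comm
      _ = ∑ a, ∑ b, ∑ c : Fin d → Fin n, (∏ k, p (c k)) *
            ((B * V) a b - (1 / d) * ∑ k, B a (c k) * V (c k) b / p (c k)) ^ 2 :=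
          Finset.sum_congr rfl fun a _ => Finset.sum_comm
  rw [swap]
  have inner : ∀ (a : Fin m) (b : Fin q),
      ∑ c : Fin d → Fin n, (∏ k, p (c k)) *
          ((B * V) a b - (1 / d) * ∑ k, B a (c k) * V (c k) b / p (c k)) ^ 2
      = (1 / d) * ((∑ i, (B a i) ^ 2 * (V i b) ^ 2 / p i) - ((B * V) a b) ^ 2) := by
    intro a b
    have hμ : ∑ i, p i * (B a i * V i b / p i) = (B * V) a b := by
      rw [Matrix.mul_apply]
      refine Finset.sum_congr rfl fun i _ => ?_
      rw [mul_div_assoc']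
      exact mul_div_cancel_left₀ _ (hp i).ne'
    rw [exp_sq_dev hd hsum (fun i => B a i * V i b / p i) _ hμ]
    congr 1
    congr 1
    refine Finset.sum_congr rfl fun i _ => ?_
    have hpi := (hp i).ne'
    field_simp
  rw [Finset.sum_congr rfl fun a _ => Finset.sum_congr rfl fun b _ => inner a b]
  have colsum : ∑ a, ∑ b, ∑ i, (B a i) ^ 2 * (V i b) ^ 2 / p i
      = ∑ i, (∑ a, (B a i) ^ 2) * (∑ b, (V i b) ^ 2) / p i := by
    rw [Finset.sum_congr rfl fun (a : Fin m) (_ : a ∈ Finset.univ) => Finset.sum_comm, Finset.sum_comm]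
    refine Finset.sum_congr rfl fun i _ => ?_
    rw [Finset.sum_mul_sum, Finset.sum_div]
    exact Finset.sum_congr rfl fun a _ => (Finset.sum_div _ _ _).symm
  simp only [← Finset.mul_sum]
  congr 1
  simp only [Finset.sum_sub_distrib]
  rw [colsum]
  rfl
end

section
/- For matrices B ∈ ℝ^{m×n} and V ∈ ℝ^{n×p} with single-sample (d = 1) sub-sampling probabilities chosen proportional to ‖B^{(i)}‖₂ ‖V_{(i)}‖₂ (assuming all these products are positive), the expected squared Frobenius error E[‖BV − B S Sᵀ V‖_F²] equals (Σ_{i=1}^n ‖B^{(i)}‖₂ ‖V_{(i)}‖₂)² − ‖BV‖_F², and these probabilities minimize the expected squared Frobenius error over all probability vectors. -/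
open Matrix BigOperators

/-- Expected squared Frobenius error of the single-sample (`d = 1`) sub-sampling
sketch with sampling probabilities `q`. -/
noncomputable def singleSampleErr {m n p : ℕ} (B : Matrix (Fin m) (Fin n) ℝ)
    (V : Matrix (Fin n) (Fin p) ℝ) (q : Fin n → ℝ) : ℝ :=
  ∑ i, q i *
    frobSq (B * V -
      B * subSampleMatrix n 1 q (fun _ => i) * (subSampleMatrix n 1 q (fun _ => i))ᵀ * V)

lemma sketch_apply {m n pdim : ℕ} (B : Matrix (Fin m) (Fin n) ℝ)
    (V : Matrix (Fin n) (Fin pdim) ℝ) (q : Fin n → ℝ) (i : Fin n) (hq : 0 ≤ q i)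
    (a : Fin m) (b : Fin pdim) :
    (B * subSampleMatrix n 1 q (fun _ => i) * (subSampleMatrix n 1 q (fun _ => i))ᵀ * V) a b
      = B a i * V i b / q i := by
  simp only [Matrix.mul_apply, Matrix.transpose_apply, subSampleMatrix, Fin.sum_univ_one]
  simp only [mul_ite, ite_mul, mul_zero, zero_mul, Finset.sum_ite_eq, Finset.mem_univ, if_true]
  have h : (1 / Real.sqrt (↑(1:ℕ) * q i)) * (1 / Real.sqrt (↑(1:ℕ) * q i)) = 1 / q i := by
    rw [Nat.cast_one, one_mul, div_mul_div_comm, one_mul, Real.mul_self_sqrt hq]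
  rw [mul_assoc (B a i), h]
  ring

lemma err_formula {m n pdim : ℕ} (B : Matrix (Fin m) (Fin n) ℝ)
    (V : Matrix (Fin n) (Fin pdim) ℝ) (q : Fin n → ℝ) (hq : ∀ i, 0 < q i) :
    singleSampleErr B V q
      = (∑ i, q i) * frobSq (B * V) - 2 * frobSq (B * V)
        + ∑ i, (∑ a, (B a i) ^ 2) * (∑ b, (V i b) ^ 2) / q i := by
  unfold singleSampleErr
  have key : ∀ i : Fin n, q i * frobSq (B * V -
      B * subSampleMatrix n 1 q (fun _ => i) * (subSampleMatrix n 1 q (fun _ => i))ᵀ * V)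
      = q i * frobSq (B * V)
        - 2 * (∑ a, ∑ b, (B * V) a b * (B a i * V i b))
        + (∑ a, (B a i) ^ 2) * (∑ b, (V i b) ^ 2) / q i := by
    intro i
    have hqi := (hq i).le
    have hne := (hq i).ne'
    have hD : (∑ a, (B a i) ^ 2) * (∑ b, (V i b) ^ 2)
        = ∑ a, ∑ b, (B a i) ^ 2 * (V i b) ^ 2 := Finset.sum_mul_sum _ _ _ _
    unfold frobSq
    simp only [Matrix.sub_apply, sketch_apply B V q i hqi]
    rw [hD]
    have expand : ∀ (a : Fin m) (b : Fin pdim),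
        ((B * V) a b - B a i * V i b / q i) ^ 2
          = (B * V) a b ^ 2 - 2 / q i * ((B * V) a b * (B a i * V i b))
            + (B a i) ^ 2 * (V i b) ^ 2 / q i ^ 2 := by
      intro a b; field_simp; ring
    simp only [expand, Finset.sum_add_distrib, Finset.sum_sub_distrib, ← Finset.mul_sum,
      ← Finset.sum_div]
    field_simp
    have e : ∑ x, (∑ y, V i y ^ 2) * B x i ^ 2 = ∑ x, B x i ^ 2 * ∑ y, V i y ^ 2 :=
      Finset.sum_congr rfl fun x _ => mul_comm _ _
    rw [e]
  have cross : (∑ i, ∑ a, ∑ b, (B * V) a b * (B a i * V i b)) = frobSq (B * V) := by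
    rw [Finset.sum_comm]
    unfold frobSq
    refine Finset.sum_congr rfl fun a _ => ?_
    rw [Finset.sum_comm]
    refine Finset.sum_congr rfl fun b _ => ?_
    rw [← Finset.mul_sum, ← Matrix.mul_apply, sq]
  rw [Finset.sum_congr rfl fun i _ => key i]
  rw [Finset.sum_add_distrib, Finset.sum_sub_distrib, ← Finset.sum_mul, ← Finset.mul_sum, cross]

/-- With `d = 1` and probabilities proportional to `‖B^{(i)}‖₂ ‖V_{(i)}‖₂`
(all positive), the expected squared Frobenius error equals
`(∑ᵢ ‖B^{(i)}‖₂ ‖V_{(i)}‖₂)² − ‖BV‖_F²`, and these probabilities minimize the expected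
squared Frobenius error over all probability vectors. -/
theorem optimal_single_sample_probabilities (m n pdim : ℕ)
    (B : Matrix (Fin m) (Fin n) ℝ) (V : Matrix (Fin n) (Fin pdim) ℝ)
    (hpos : ∀ i : Fin n,
      0 < Real.sqrt (∑ a, (B a i) ^ 2) * Real.sqrt (∑ b, (V i b) ^ 2))
    (p : Fin n → ℝ)
    (hp : ∀ i, p i = Real.sqrt (∑ a, (B a i) ^ 2) * Real.sqrt (∑ b, (V i b) ^ 2) /
      (∑ i', Real.sqrt (∑ a, (B a i') ^ 2) * Real.sqrt (∑ b, (V i' b) ^ 2))) :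
    singleSampleErr B V p =
      (∑ i, Real.sqrt (∑ a, (B a i) ^ 2) * Real.sqrt (∑ b, (V i b) ^ 2)) ^ 2 -
        frobSq (B * V) ∧
    ∀ q : Fin n → ℝ, (∀ i, 0 < q i) → (∑ i, q i) = 1 →
      singleSampleErr B V p ≤ singleSampleErr B V q := by
  rcases Nat.eq_zero_or_pos n with hn | hn
  · subst hn
    constructor
    · simp [singleSampleErr, frobSq, Matrix.mul_apply]
    · intro q hq hsum
      simp at hsum
  haveI : NeZero n := ⟨hn.ne'⟩
  set α : Fin n → ℝ := fun i => ∑ a, (B a i) ^ 2 with hα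
  set β : Fin n → ℝ := fun i => ∑ b, (V i b) ^ 2 with hβ
  set s : Fin n → ℝ := fun i => Real.sqrt (α i) * Real.sqrt (β i) with hs
  have αnn : ∀ i, 0 ≤ α i := fun i => Finset.sum_nonneg fun a _ => sq_nonneg _
  have βnn : ∀ i, 0 ≤ β i := fun i => Finset.sum_nonneg fun b _ => sq_nonneg _
  have hspos : ∀ i, 0 < s i := hpos
  have hT : 0 < ∑ i, s i := Finset.sum_pos (fun i _ => hspos i) Finset.univ_nonempty
  have hsq : ∀ i, s i ^ 2 = α i * β i := by
    intro i
    rw [hs, mul_pow, Real.sq_sqrt (αnn i), Real.sq_sqrt (βnn i)]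
  have hppos : ∀ i, 0 < p i := by
    intro i; rw [hp i]; exact div_pos (hspos i) hT
  have hpsum : (∑ i, p i) = 1 := by
    rw [Finset.sum_congr rfl fun i _ => hp i, ← Finset.sum_div, div_self hT.ne']
  have herrp : singleSampleErr B V p = (∑ i, s i) ^ 2 - frobSq (B * V) := by
    rw [err_formula B V p hppos, hpsum]
    have : ∀ i : Fin n, α i * β i / p i = s i * (∑ i', s i') := by
      intro i
      rw [hp i, show Real.sqrt (∑ a, (B a i) ^ 2) * Real.sqrt (∑ b, (V i b) ^ 2) = s i
        from rfl, ← hsq i]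
      field_simp [(hspos i).ne']
    rw [Finset.sum_congr rfl fun i _ => this i, ← Finset.sum_mul, sq]
    ring
  refine ⟨herrp, fun q hq hqsum => ?_⟩
  rw [herrp, err_formula B V q hq, hqsum]
  have key : (∑ i, s i) ^ 2 ≤ ∑ i, α i * β i / q i := by
    have h1 : ∀ i : Fin n, s i = Real.sqrt (α i * β i / q i) * Real.sqrt (q i) := by
      intro i
      rw [← Real.sqrt_mul (div_nonneg (mul_nonneg (αnn i) (βnn i)) (hq i).le),
        div_mul_cancel₀ _ (hq i).ne',
        Real.sqrt_mul (αnn i)]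
    calc (∑ i, s i) ^ 2
        = (∑ i, Real.sqrt (α i * β i / q i) * Real.sqrt (q i)) ^ 2 := by
          rw [Finset.sum_congr rfl fun i _ => h1 i]
      _ ≤ (∑ i, Real.sqrt (α i * β i / q i) ^ 2) * ∑ i, Real.sqrt (q i) ^ 2 :=
          Finset.sum_mul_sq_le_sq_mul_sq _ _ _
      _ = ∑ i, α i * β i / q i := by
          rw [Finset.sum_congr rfl fun i (_ : i ∈ Finset.univ) =>
              Real.sq_sqrt (div_nonneg (mul_nonneg (αnn i) (βnn i)) (hq i).le),
            Finset.sum_congr rfl fun i (_ : i ∈ Finset.univ) => Real.sq_sqrt (hq i).le,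
            hqsum, mul_one]
  linarith
end

section
/- Let B ∈ ℝ^{m×n}, V ∈ ℝ^{n×p}, β ∈ (0,1], and suppose p_i ≥ β ‖B^{(i)}‖₂‖V_{(i)}‖₂ / (Σ_{i'} ‖B^{(i')}‖₂‖V_{(i')}‖₂) for all i, with Σ p_i = 1 and all ‖B^{(i)}‖₂‖V_{(i)}‖₂ > 0. Then for a sub-sampling matrix S with d columns, E[‖BV − B S Sᵀ V‖_F²] ≤ (1/(β d)) ‖B‖_F² ‖V‖_F². -/
open Matrix BigOperators

lemma sum_pi_prod {n d : ℕ} (f : Fin d → Fin n → ℝ) :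
    ∑ c : Fin d → Fin n, ∏ k, f k (c k) = ∏ k, ∑ i, f k i := by
  rw [Finset.prod_univ_sum]; rfl

lemma exp_sq {n d : ℕ} (p : Fin n → ℝ) (hsum : ∑ i, p i = 1)
    (g : Fin n → ℝ) (hmean : ∑ i, p i * g i = 0) :
    ∑ c : Fin d → Fin n, (∏ k, p (c k)) * (∑ k, g (c k)) ^ 2
      = d * ∑ i, p i * (g i) ^ 2 := by
  have key : ∀ c : Fin d → Fin n,
      (∏ k, p (c k)) * (∑ k, g (c k)) ^ 2
        = ∑ k : Fin d, ∑ l : Fin d,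
            ∏ j : Fin d, (p (c j) * (if j = k then g (c j) else 1)
              * (if j = l then g (c j) else 1)) := by
    intro c
    rw [sq, Finset.sum_mul_sum]
    rw [Finset.mul_sum]
    refine Finset.sum_congr rfl fun k _ => ?_
    rw [Finset.mul_sum]
    refine Finset.sum_congr rfl fun l _ => ?_
    rw [Finset.prod_mul_distrib, Finset.prod_mul_distrib,
      Finset.prod_ite_eq' Finset.univ k (fun j => g (c j)),
      Finset.prod_ite_eq' Finset.univ l (fun j => g (c j))]
    simp [mul_comm, mul_assoc, mul_left_comm]
  calc ∑ c : Fin d → Fin n, (∏ k, p (c k)) * (∑ k, g (c k)) ^ 2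
      = ∑ k : Fin d, ∑ l : Fin d, ∑ c : Fin d → Fin n,
          ∏ j : Fin d, (p (c j) * (if j = k then g (c j) else 1)
            * (if j = l then g (c j) else 1)) := by
        rw [Finset.sum_congr rfl fun c _ => key c, Finset.sum_comm]
        exact Finset.sum_congr rfl fun k _ => Finset.sum_comm
    _ = ∑ k : Fin d, ∑ l : Fin d, (if l = k then ∑ i, p i * g i ^ 2 else 0) := by
        refine Finset.sum_congr rfl fun k _ => Finset.sum_congr rfl fun l _ => ?_
        rw [sum_pi_prod (fun j i => p i * (if j = k then g i else 1)
          * (if j = l then g i else 1))]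
        by_cases hlk : l = k
        · subst hlk
          simp only [if_pos rfl]
          have : ∀ j : Fin d, (∑ i, p i * (if j = l then g i else 1)
              * (if j = l then g i else 1)) = if j = l then ∑ i, p i * g i ^2 else 1 := by
            intro j
            by_cases hj : j = l
            · simp [hj, sq, mul_assoc]
            · simp [hj, hsum]
          rw [Finset.prod_congr rfl fun j _ => this j, Finset.prod_ite_eq' Finset.univ l]
          simp
        · rw [if_neg hlk]
          apply Finset.prod_eq_zero (Finset.mem_univ k)
          have : (∑ i, p i * (if k = k then g i else 1) * (if k = l then g i else 1))
              = ∑ i, p i * g i := by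
            refine Finset.sum_congr rfl fun i _ => ?_
            rw [if_pos rfl, if_neg (fun h => hlk h.symm), mul_one]
          rw [this]; exact hmean
  simp [Finset.sum_ite_eq, Finset.mul_sum]

lemma entry_eq {m n q d : ℕ} (hd : 0 < d) (B : Matrix (Fin m) (Fin n) ℝ)
    (V : Matrix (Fin n) (Fin q) ℝ) (p : Fin n → ℝ) (hp : ∀ i, 0 < p i)
    (c : Fin d → Fin n) (a : Fin m) (b : Fin q) :
    (B * V - B * subSampleMatrix n d p c * (subSampleMatrix n d p c)ᵀ * V) a b
      = ∑ k, ((B * V) a b / d - B a (c k) * V (c k) b / (d * p (c k))) := by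
  have hd' : (0:ℝ) < d := by exact_mod_cast hd
  have h1 : (B * subSampleMatrix n d p c * (subSampleMatrix n d p c)ᵀ * V) a b
      = ∑ k, B a (c k) * V (c k) b / (d * p (c k)) := by
    rw [Matrix.mul_assoc (B * subSampleMatrix n d p c), Matrix.mul_apply]
    refine Finset.sum_congr rfl fun k _ => ?_
    have hBS : (B * subSampleMatrix n d p c) a k
        = B a (c k) * (1 / Real.sqrt (d * p (c k))) := by
      rw [Matrix.mul_apply]
      simp [subSampleMatrix, mul_ite, Finset.sum_ite_eq]
    have hSV : ((subSampleMatrix n d p c)ᵀ * V) k b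
        = (1 / Real.sqrt (d * p (c k))) * V (c k) b := by
      rw [Matrix.mul_apply]
      simp [subSampleMatrix, transpose_apply, ite_mul, Finset.sum_ite_eq]
    have hpos : (0:ℝ) ≤ d * p (c k) := le_of_lt (mul_pos hd' (hp _))
    have hs : Real.sqrt (d * p (c k)) * Real.sqrt (d * p (c k)) = d * p (c k) :=
      Real.mul_self_sqrt hpos
    have hrr : B a (c k) * (1 / Real.sqrt (d * p (c k)))
        * (1 / Real.sqrt (d * p (c k)) * V (c k) b)
        = B a (c k) * V (c k) b
          * (1 / (Real.sqrt (d * p (c k)) * Real.sqrt (d * p (c k)))) := by ring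
    rw [hBS, hSV, hrr, hs, mul_one_div]
  rw [Matrix.sub_apply, h1, Finset.sum_sub_distrib, Finset.sum_const]
  simp [Finset.card_univ]
  field_simp

lemma var_le_aux {n : ℕ} (p : Fin n → ℝ) (hsum : ∑ i, p i = 1)
    (z : Fin n → ℝ) (t : ℝ) (ht : t = ∑ j, p j * z j) :
    ∑ i, p i * (t - z i) ^ 2 ≤ ∑ i, p i * z i ^ 2 := by
  have expand : ∀ i, p i * (t - z i) ^ 2
      = t ^ 2 * p i - 2 * t * (p i * z i) + p i * z i ^ 2 := fun i => by ring
  calc ∑ i, p i * (t - z i) ^ 2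
      = ∑ i, (t ^ 2 * p i - 2 * t * (p i * z i) + p i * z i ^ 2) :=
        Finset.sum_congr rfl fun i _ => expand i
    _ = t ^ 2 * (∑ i, p i) - 2 * t * (∑ i, p i * z i) + ∑ i, p i * z i ^ 2 := by
        rw [Finset.sum_add_distrib, Finset.sum_sub_distrib, ← Finset.mul_sum,
          ← Finset.mul_sum]
    _ ≤ ∑ i, p i * z i ^ 2 := by rw [hsum, ← ht]; nlinarith [sq_nonneg t]

/-- If the sub-sampling probabilities satisfy
`pᵢ ≥ β ‖B^{(i)}‖‖V_{(i)}‖ / ∑_{i'} ‖B^{(i')}‖‖V_{(i')}‖` for a quality coefficient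
`β ∈ (0,1]`, then `E[‖BV − B S Sᵀ V‖_F²] ≤ (1/(β d)) ‖B‖_F² ‖V‖_F²`. -/
theorem expected_frobenius_error_bound (m n q d : ℕ) (hd : 0 < d)
    (B : Matrix (Fin m) (Fin n) ℝ) (V : Matrix (Fin n) (Fin q) ℝ)
    (β : ℝ) (hβ0 : 0 < β) (hβ1 : β ≤ 1)
    (hpos : ∀ i : Fin n,
      0 < Real.sqrt (∑ a, (B a i) ^ 2) * Real.sqrt (∑ b, (V i b) ^ 2))
    (p : Fin n → ℝ) (hp : ∀ i, 0 < p i) (hsum : ∑ i, p i = 1)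
    (hquality : ∀ i, p i ≥
      β * (Real.sqrt (∑ a, (B a i) ^ 2) * Real.sqrt (∑ b, (V i b) ^ 2)) /
        (∑ i', Real.sqrt (∑ a, (B a i') ^ 2) * Real.sqrt (∑ b, (V i' b) ^ 2))) :
    (∑ c : Fin d → Fin n, (∏ k, p (c k)) *
        frobSq (B * V - B * subSampleMatrix n d p c * (subSampleMatrix n d p c)ᵀ * V))
      ≤ (1 / (β * d)) * frobSq B * frobSq V := by
  have hd' : (0:ℝ) < d := by exact_mod_cast hd
  -- abbreviations
  set s : Fin n → ℝ :=
    fun i => Real.sqrt (∑ a, (B a i) ^ 2) * Real.sqrt (∑ b, (V i b) ^ 2) with hs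
  set T : ℝ := ∑ i, s i with hT
  have hne : (Finset.univ : Finset (Fin n)).Nonempty := by
    by_contra h
    rw [Finset.not_nonempty_iff_eq_empty] at h
    rw [h, Finset.sum_empty] at hsum; norm_num at hsum
  have hT0 : 0 < T := Finset.sum_pos (fun i _ => hpos i) hne
  -- the centered random variable per entry
  have ht : ∀ (a : Fin m) (b : Fin q),
      (B * V) a b / d = ∑ j, p j * (B a j * V j b / (d * p j)) := by
    intro a b
    have : ∀ j, p j * (B a j * V j b / (d * p j)) = B a j * V j b / d := by
      intro j
      have hpj : p j ≠ 0 := (hp j).ne'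
      field_simp
    rw [Finset.sum_congr rfl fun j _ => this j, ← Finset.sum_div, ← Matrix.mul_apply]
  have hmean : ∀ (a : Fin m) (b : Fin q),
      ∑ i, p i * ((B * V) a b / d - B a i * V i b / (d * p i)) = 0 := by
    intro a b
    have expand : ∀ i, p i * ((B * V) a b / d - B a i * V i b / (d * p i))
        = (B * V) a b / d * p i - p i * (B a i * V i b / (d * p i)) := fun i => by ring
    rw [Finset.sum_congr rfl fun i _ => expand i, Finset.sum_sub_distrib,
      ← Finset.mul_sum, hsum, ← ht a b]
    ring
  -- Step 1: exact expectation
  have step1 : (∑ c : Fin d → Fin n, (∏ k, p (c k)) *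
        frobSq (B * V - B * subSampleMatrix n d p c * (subSampleMatrix n d p c)ᵀ * V))
      = ∑ a, ∑ b, (d:ℝ) *
          ∑ i, p i * ((B * V) a b / d - B a i * V i b / (d * p i)) ^ 2 := by
    unfold frobSq
    calc (∑ c : Fin d → Fin n, (∏ k, p (c k)) * ∑ a, ∑ b,
            ((B * V - B * subSampleMatrix n d p c * (subSampleMatrix n d p c)ᵀ * V) a b) ^ 2)
        = ∑ c : Fin d → Fin n, ∑ a, ∑ b, (∏ k, p (c k)) *
            (∑ k, ((B * V) a b / d - B a (c k) * V (c k) b / (d * p (c k)))) ^ 2 := by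
          refine Finset.sum_congr rfl fun c _ => ?_
          rw [Finset.mul_sum]
          refine Finset.sum_congr rfl fun a _ => ?_
          rw [Finset.mul_sum]
          refine Finset.sum_congr rfl fun b _ => ?_
          rw [entry_eq hd B V p hp c a b]
      _ = ∑ a, ∑ b, ∑ c : Fin d → Fin n, (∏ k, p (c k)) *
            (∑ k, ((B * V) a b / d - B a (c k) * V (c k) b / (d * p (c k)))) ^ 2 := by
          rw [Finset.sum_comm]
          exact Finset.sum_congr rfl fun a _ => Finset.sum_comm
      _ = ∑ a, ∑ b, (d:ℝ) *
            ∑ i, p i * ((B * V) a b / d - B a i * V i b / (d * p i)) ^ 2 := by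
          refine Finset.sum_congr rfl fun a _ => Finset.sum_congr rfl fun b _ => ?_
          exact exp_sq p hsum
            (fun i => (B * V) a b / d - B a i * V i b / (d * p i)) (hmean a b)
  rw [step1]
  -- Step 2: drop the (negative of the) mean, i.e. variance ≤ second moment
  have step2 : ∑ a, ∑ b, (d:ℝ) *
        ∑ i, p i * ((B * V) a b / d - B a i * V i b / (d * p i)) ^ 2
      ≤ ∑ a, ∑ b, (d:ℝ) * ∑ i, p i * (B a i * V i b / (d * p i)) ^ 2 := by
    refine Finset.sum_le_sum fun a _ => Finset.sum_le_sum fun b _ => ?_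
    refine mul_le_mul_of_nonneg_left ?_ (le_of_lt hd')
    exact var_le_aux p hsum (fun i => B a i * V i b / (d * p i)) _ (ht a b)
  refine le_trans step2 ?_
  -- Step 3: rewrite the second moment
  have step3 : ∑ a, ∑ b, (d:ℝ) * ∑ i, p i * (B a i * V i b / (d * p i)) ^ 2
      = ∑ i, (∑ a, (B a i) ^ 2) * (∑ b, (V i b) ^ 2) / (d * p i) := by
    have hterm : ∀ (a : Fin m) (b : Fin q) (i : Fin n),
        p i * (B a i * V i b / (d * p i)) ^ 2
          = (B a i) ^ 2 * (V i b) ^ 2 / (d ^ 2 * p i) := by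
      intro a b i
      have hpi : p i ≠ 0 := (hp i).ne'
      have hdne : (d:ℝ) ≠ 0 := hd'.ne'
      field_simp
    calc ∑ a, ∑ b, (d:ℝ) * ∑ i, p i * (B a i * V i b / (d * p i)) ^ 2
        = ∑ a, ∑ b, ∑ i, (B a i) ^ 2 * (V i b) ^ 2 / (d * p i) := by
          refine Finset.sum_congr rfl fun a _ => Finset.sum_congr rfl fun b _ => ?_
          rw [Finset.mul_sum]
          refine Finset.sum_congr rfl fun i _ => ?_
          rw [hterm a b i]
          have hpi : p i ≠ 0 := (hp i).ne'
          have hdne : (d:ℝ) ≠ 0 := hd'.ne'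
          field_simp
      _ = ∑ a, ∑ i, ∑ b, (B a i) ^ 2 * (V i b) ^ 2 / (d * p i) :=
          Finset.sum_congr rfl fun a _ => Finset.sum_comm
      _ = ∑ i, ∑ a, ∑ b, (B a i) ^ 2 * (V i b) ^ 2 / (d * p i) := Finset.sum_comm
      _ = ∑ i, (∑ a, (B a i) ^ 2) * (∑ b, (V i b) ^ 2) / (d * p i) := by
          refine Finset.sum_congr rfl fun i _ => ?_
          have hinner : ∀ a : Fin m, ∑ b, (B a i) ^ 2 * (V i b) ^ 2 / (d * p i)
              = (B a i) ^ 2 * (∑ b, (V i b) ^ 2) / (d * p i) := fun a => by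
            rw [← Finset.sum_div, ← Finset.mul_sum]
          rw [Finset.sum_congr rfl fun a _ => hinner a, ← Finset.sum_div,
            ← Finset.sum_mul]
  rw [step3]
  -- Step 4: per-index bound using the quality condition
  have step4 : ∑ i, (∑ a, (B a i) ^ 2) * (∑ b, (V i b) ^ 2) / (d * p i)
      ≤ ∑ i, s i * T / (β * d) := by
    refine Finset.sum_le_sum fun i _ => ?_
    have hsi : 0 < s i := hpos i
    have hA0 : (0:ℝ) ≤ ∑ a, (B a i) ^ 2 :=
      Finset.sum_nonneg fun a _ => sq_nonneg _
    have hC0 : (0:ℝ) ≤ ∑ b, (V i b) ^ 2 :=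
      Finset.sum_nonneg fun b _ => sq_nonneg _
    have hAC : (∑ a, (B a i) ^ 2) * (∑ b, (V i b) ^ 2) = s i ^ 2 := by
      rw [hs]
      simp only []
      rw [mul_pow, Real.sq_sqrt hA0, Real.sq_sqrt hC0]
    have hq : β * s i ≤ p i * T := by
      have := hquality i
      rw [ge_iff_le, div_le_iff₀ hT0] at this
      exact this
    rw [hAC, div_le_div_iff₀ (mul_pos hd' (hp i)) (mul_pos hβ0 hd')]
    nlinarith [mul_le_mul_of_nonneg_left hq (mul_pos hsi hd').le]
  refine le_trans step4 ?_
  -- Step 5: Cauchy–Schwarz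
  have hcs : T * T ≤ frobSq B * frobSq V := by
    have h := Finset.sum_mul_sq_le_sq_mul_sq Finset.univ
      (fun i : Fin n => Real.sqrt (∑ a, (B a i) ^ 2))
      (fun i : Fin n => Real.sqrt (∑ b, (V i b) ^ 2))
    have hB : (∑ i : Fin n, Real.sqrt (∑ a, (B a i) ^ 2) ^ 2) = frobSq B := by
      rw [Finset.sum_congr rfl fun i _ => Real.sq_sqrt
        (Finset.sum_nonneg fun a _ => sq_nonneg (B a i))]
      exact (Finset.sum_comm).symm
    have hV : (∑ i : Fin n, Real.sqrt (∑ b, (V i b) ^ 2) ^ 2) = frobSq V := by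
      rw [Finset.sum_congr rfl fun i _ => Real.sq_sqrt
        (Finset.sum_nonneg fun b _ => sq_nonneg (V i b))]
      rfl
    rw [hB, hV] at h
    calc T * T = (∑ i, s i) ^ 2 := by rw [← hT]; ring
      _ ≤ frobSq B * frobSq V := h
  calc ∑ i, s i * T / (β * d) = T * T / (β * d) := by
        rw [← Finset.sum_div, ← Finset.sum_mul, ← hT]
    _ ≤ frobSq B * frobSq V / (β * d) :=
        (div_le_div_iff_of_pos_right (by positivity)).mpr hcs
    _ = 1 / (β * d) * frobSq B * frobSq V := by ring
end
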